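/- Let P and Q be orthogonal projections such that P − Q is in the Schatten class 𝔖_{2m+1} for some integer m ≥ 0 (so (P−Q)^{2m+1} is trace class). Then tr[(P−Q)^{2m+1}] = tr[(P−Q)^{2l+1}] for every integer l ≥ m, and this common value equals ind(P,Q), an integer. -/

import Mathlib

set_option linter.unusedSectionVars false
set_option linter.unusedVariables false
set_option maxHeartbeats 2000000

/-- Hilbert–Schmidt property. -/
def IsHilbertSchmidt {H : Type*} [NormedAddCommGroup H] [InnerProductSpace ℂ H]
    [CompleteSpace H] (T : H →L[ℂ] H) : Prop :=
  ∃ (ι : Type) (e : HilbertBasis ι ℂ H), Summable fun i => ‖T (e i)‖ ^ 2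

/-- Trace class via factorization into two Hilbert–Schmidt operators. -/
def IsTraceClass {H : Type*} [NormedAddCommGroup H] [InnerProductSpace ℂ H]
    [CompleteSpace H] (T : H →L[ℂ] H) : Prop :=
  ∃ A B : H →L[ℂ] H, IsHilbertSchmidt A ∧ IsHilbertSchmidt B ∧ T = A.comp B

/-- The index of a pair of orthogonal projections,
`ind(P,Q) = dim(Ker Q ∩ Ran P) − dim(Ker P ∩ Ran Q)`. -/
noncomputable def pairIndex {H : Type*} [NormedAddCommGroup H] [InnerProductSpace ℂ H]
    [CompleteSpace H] (P Q : H →L[ℂ] H) : ℤ :=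
  (Module.finrank ℂ ↥(LinearMap.ker (Q : H →ₗ[ℂ] H) ⊓ LinearMap.range (P : H →ₗ[ℂ] H)) : ℤ) -
    (Module.finrank ℂ ↥(LinearMap.ker (P : H →ₗ[ℂ] H) ⊓ LinearMap.range (Q : H →ₗ[ℂ] H)) : ℤ)

open ContinuousLinearMap (adjoint)

section ASS
variable {H : Type*} [NormedAddCommGroup H] [InnerProductSpace ℂ H] [CompleteSpace H]

local notation "⟪" x ", " y "⟫" => @inner ℂ _ _ x y

lemma ass_parseval {ι : Type*} (b : HilbertBasis ι ℂ H) (x : H) :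
    HasSum (fun i => ‖⟪b i, x⟫‖ ^ 2) (‖x‖ ^ 2) := by
  have h := b.hasSum_inner_mul_inner x x
  have h2 : (fun i => ⟪x, b i⟫ * ⟪b i, x⟫) = fun i => ((‖⟪b i, x⟫‖ ^ 2 : ℝ) : ℂ) := by
    funext i
    rw [show ⟪x, b i⟫ = (starRingEnd ℂ) ⟪b i, x⟫ from (inner_conj_symm x (b i)).symm,
      RCLike.conj_mul]
    norm_cast
  rw [h2, inner_self_eq_norm_sq_to_K] at h
  rw [← Complex.hasSum_ofReal]
  convert h using 1
  all_goals norm_cast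

lemma ass_hs_swap {ι κ : Type*} (e : HilbertBasis ι ℂ H) (f : HilbertBasis κ ℂ H)
    {T : H →L[ℂ] H} (hT : Summable fun i => ‖T (e i)‖ ^ 2) :
    HasSum (fun j => ‖adjoint T (f j)‖ ^ 2) (∑' i, ‖T (e i)‖ ^ 2) := by
  set G : ι × κ → ℝ := fun p => ‖⟪f p.2, T (e p.1)⟫‖ ^ 2 with hG
  have hGnn : 0 ≤ G := fun p => by positivity
  have hrow : ∀ i, HasSum (fun j => G (i, j)) (‖T (e i)‖ ^ 2) := fun i =>
    ass_parseval f (T (e i))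
  have hGsum : Summable G := by
    rw [summable_prod_of_nonneg hGnn]
    refine ⟨fun i => (hrow i).summable, ?_⟩
    convert hT using 1
    funext i
    exact (hrow i).tsum_eq
  have hcolval : ∀ i j, G (i, j) = ‖⟪e i, adjoint T (f j)⟫‖ ^ 2 := by
    intro i j
    rw [hG]
    simp only
    rw [← ContinuousLinearMap.adjoint_inner_left, norm_inner_symm]
  have hcol : ∀ j, HasSum (fun i => G (i, j)) (‖adjoint T (f j)‖ ^ 2) := fun j => by
    simp only [hcolval]
    exact ass_parseval e (adjoint T (f j))
  have h1 : HasSum (fun i => ‖T (e i)‖ ^ 2) (∑' p, G p) :=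
    hGsum.hasSum.prod_fiberwise hrow
  have hGswap : HasSum (fun p : κ × ι => G (p.2, p.1)) (∑' p, G p) :=
    ((Equiv.prodComm κ ι).hasSum_iff).2 hGsum.hasSum
  have h2 : HasSum (fun j => ‖adjoint T (f j)‖ ^ 2) (∑' p, G p) :=
    hGswap.prod_fiberwise fun j => hcol j
  rwa [h1.tsum_eq]

lemma IsHilbertSchmidt.summable_basis {T : H →L[ℂ] H} (hT : IsHilbertSchmidt T)
    {ι : Type*} (e : HilbertBasis ι ℂ H) : Summable fun i => ‖T (e i)‖ ^ 2 := by
  obtain ⟨ι₀, e₀, h₀⟩ := hT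
  have h1 := (ass_hs_swap e₀ e h₀).summable
  have h2 := (ass_hs_swap e e h1).summable
  rwa [ContinuousLinearMap.adjoint_adjoint] at h2

lemma IsHilbertSchmidt.adjoint {T : H →L[ℂ] H} (hT : IsHilbertSchmidt T) :
    IsHilbertSchmidt (adjoint T) := by
  obtain ⟨ι₀, e₀, h₀⟩ := hT
  exact ⟨ι₀, e₀, (ass_hs_swap e₀ e₀ h₀).summable⟩

lemma IsHilbertSchmidt.mul_left (C : H →L[ℂ] H) {T : H →L[ℂ] H} (hT : IsHilbertSchmidt T) :
    IsHilbertSchmidt (C * T) := by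
  obtain ⟨ι₀, e₀, h₀⟩ := hT
  refine ⟨ι₀, e₀, Summable.of_nonneg_of_le (fun i => by positivity)
    (fun i => ?_) (h₀.mul_left (‖C‖ ^ 2))⟩
  have : ‖C (T (e₀ i))‖ ≤ ‖C‖ * ‖T (e₀ i)‖ := C.le_opNorm _
  calc ‖(C * T) (e₀ i)‖ ^ 2 = ‖C (T (e₀ i))‖ ^ 2 := rfl
    _ ≤ (‖C‖ * ‖T (e₀ i)‖) ^ 2 := by gcongr
    _ = ‖C‖ ^ 2 * ‖T (e₀ i)‖ ^ 2 := by ring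

lemma IsHilbertSchmidt.mul_right (C : H →L[ℂ] H) {T : H →L[ℂ] H} (hT : IsHilbertSchmidt T) :
    IsHilbertSchmidt (T * C) := by
  have h := IsHilbertSchmidt.adjoint
    (IsHilbertSchmidt.mul_left (ContinuousLinearMap.adjoint C) hT.adjoint)
  rwa [ContinuousLinearMap.mul_def, ContinuousLinearMap.adjoint_comp,
    ContinuousLinearMap.adjoint_adjoint, ContinuousLinearMap.adjoint_adjoint,
    ← ContinuousLinearMap.mul_def] at h

lemma ass_prodnorm_summable {ι : Type*} (e : HilbertBasis ι ℂ H) {X Y : H →L[ℂ] H}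
    (hX : IsHilbertSchmidt X) (hY : IsHilbertSchmidt Y) :
    Summable fun i => ‖adjoint X (e i)‖ * ‖Y (e i)‖ := by
  have h1 := hX.adjoint.summable_basis e
  have h2 := hY.summable_basis e
  refine Summable.of_nonneg_of_le (fun i => by positivity) (fun i => ?_)
    (((h1.add h2).div_const 2))
  have := sq_nonneg (‖adjoint X (e i)‖ - ‖Y (e i)‖)
  nlinarith [norm_nonneg (adjoint X (e i)), norm_nonneg (Y (e i))]

lemma ass_diag_bound {X Y : H →L[ℂ] H} (x : H) :
    ‖⟪x, (X * Y) x⟫‖ ≤ ‖adjoint X x‖ * ‖Y x‖ := by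
  have : ⟪x, (X * Y) x⟫ = ⟪adjoint X x, Y x⟫ := by
    rw [ContinuousLinearMap.adjoint_inner_left]
    rfl
  rw [this]
  exact norm_inner_le_norm _ _

lemma ass_traceclass_summable {ι : Type*} (e : HilbertBasis ι ℂ H) {X Y : H →L[ℂ] H}
    (hX : IsHilbertSchmidt X) (hY : IsHilbertSchmidt Y) :
    Summable fun i => ⟪e i, (X * Y) (e i)⟫ :=
  Summable.of_norm <| Summable.of_nonneg_of_le (fun i => norm_nonneg _)
    (fun i => ass_diag_bound (e i)) (ass_prodnorm_summable e hX hY)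

lemma ass_cyclic {ι κ : Type*} (e : HilbertBasis ι ℂ H) (f : HilbertBasis κ ℂ H)
    {X Y : H →L[ℂ] H} (hX : IsHilbertSchmidt X) (hY : IsHilbertSchmidt Y) :
    ∑' i, ⟪e i, (X * Y) (e i)⟫ = ∑' j, ⟪f j, (Y * X) (f j)⟫ := by
  set F : ι × κ → ℂ := fun p => ⟪adjoint X (e p.1), f p.2⟫ * ⟪f p.2, Y (e p.1)⟫ with hF
  have hFsum : Summable F := by
    have hg1 : Summable fun p : ι × κ => ‖⟪adjoint X (e p.1), f p.2⟫‖ ^ 2 := by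
      rw [summable_prod_of_nonneg (fun p => by positivity)]
      constructor
      · intro i
        have := (ass_parseval f (adjoint X (e i))).summable
        refine this.congr fun j => ?_
        rw [norm_inner_symm]
      · refine Summable.congr (hX.adjoint.summable_basis e) fun i => ?_
        have := ass_parseval f (adjoint X (e i))
        rw [← this.tsum_eq]
        refine tsum_congr fun j => ?_
        rw [norm_inner_symm]
    have hg2 : Summable fun p : ι × κ => ‖⟪f p.2, Y (e p.1)⟫‖ ^ 2 := by
      rw [summable_prod_of_nonneg (fun p => by positivity)]
      exact ⟨fun i => (ass_parseval f (Y (e i))).summable,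
        Summable.congr (hY.summable_basis e) fun i => (ass_parseval f (Y (e i))).tsum_eq.symm⟩
    refine Summable.of_norm <| Summable.of_nonneg_of_le (fun p => norm_nonneg _)
      (fun p => ?_) ((hg1.add hg2).div_const 2)
    simp only [Pi.add_apply, hF, norm_mul]
    nlinarith [sq_nonneg (‖⟪adjoint X (e p.1), f p.2⟫‖ - ‖⟪f p.2, Y (e p.1)⟫‖),
      norm_nonneg (⟪adjoint X (e p.1), f p.2⟫), norm_nonneg (⟪f p.2, Y (e p.1)⟫)]
  have hrow : ∀ i, HasSum (fun j => F (i, j)) ⟪e i, (X * Y) (e i)⟫ := by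
    intro i
    have h := f.hasSum_inner_mul_inner (adjoint X (e i)) (Y (e i))
    rwa [show ⟪adjoint X (e i), Y (e i)⟫ = ⟪e i, (X * Y) (e i)⟫ by
      rw [ContinuousLinearMap.adjoint_inner_left]; rfl] at h
  have hcol : ∀ j, HasSum (fun i => F (i, j)) ⟪f j, (Y * X) (f j)⟫ := by
    intro j
    have h := e.hasSum_inner_mul_inner (adjoint Y (f j)) (X (f j))
    have hval : ∀ i, ⟪adjoint Y (f j), e i⟫ * ⟪e i, X (f j)⟫ = F (i, j) := by
      intro i
      rw [hF]
      simp only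
      rw [ContinuousLinearMap.adjoint_inner_left Y (e i) (f j),
        ContinuousLinearMap.adjoint_inner_left X (f j) (e i), mul_comm]
    rw [show ⟪adjoint Y (f j), X (f j)⟫ = ⟪f j, (Y * X) (f j)⟫ by
      rw [ContinuousLinearMap.adjoint_inner_left]; rfl] at h
    exact HasSum.congr_fun h fun i => (hval i).symm
  have h1 : HasSum (fun i => ⟪e i, (X * Y) (e i)⟫) (∑' p, F p) :=
    hFsum.hasSum.prod_fiberwise hrow
  have hswap : HasSum (fun p : κ × ι => F (p.2, p.1)) (∑' p, F p) :=
    ((Equiv.prodComm κ ι).hasSum_iff).2 hFsum.hasSum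
  have h2 : HasSum (fun j => ⟪f j, (Y * X) (f j)⟫) (∑' p, F p) :=
    hswap.prod_fiberwise hcol
  rw [h1.tsum_eq, h2.tsum_eq]

lemma ass_pow_apply (A : H →L[ℂ] H) (n k : ℕ) (x : H) :
    (A ^ n) ((A ^ k) x) = (A ^ (n + k)) x := by
  rw [pow_add]; rfl

lemma ass_sa_inner_pow {A : H →L[ℂ] H} (hA : IsSelfAdjoint A) (n : ℕ) (x y : H) :
    ⟪(A ^ n) x, y⟫ = ⟪x, (A ^ n) y⟫ := by
  have h : adjoint (A ^ n) = A ^ n := ContinuousLinearMap.isSelfAdjoint_iff'.1 (hA.pow n)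
  rw [← ContinuousLinearMap.adjoint_inner_left (A ^ n), h]

lemma ass_inner_even_pow {A : H →L[ℂ] H} (hA : IsSelfAdjoint A) (j : ℕ) (x : H) :
    ⟪x, (A ^ (2 * j)) x⟫ = ((‖(A ^ j) x‖ ^ 2 : ℝ) : ℂ) := by
  rw [two_mul, ← ass_pow_apply A j j x, ← ass_sa_inner_pow hA j, inner_self_eq_norm_sq_to_K]
  norm_cast

lemma ass_pointwise {A : H →L[ℂ] H} (hA : IsSelfAdjoint A) (hc : ∀ y, ‖A y‖ ≤ ‖y‖)
    {x : H} (hp : ∀ y, A y = y → ⟪x, y⟫ = 0) (hm : ∀ y, A y = -y → ⟪x, y⟫ = 0) :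
    Filter.Tendsto (fun l : ℕ => ⟪x, (A ^ (2 * l + 1)) x⟫) Filter.atTop (nhds 0) := by
  classical
  set d : ℕ → ℝ := fun n => ‖(A ^ n) x‖ ^ 2 with hd
  have hdnn : ∀ n, 0 ≤ d n := fun n => by positivity
  have hdsucc : ∀ n, d (n + 1) ≤ d n := by
    intro n
    have h1 : (A ^ (n + 1)) x = A ((A ^ n) x) := by
      rw [pow_succ']; rfl
    have := hc ((A ^ n) x)
    simp only [hd, h1]
    have h0 : (0:ℝ) ≤ ‖(A ^ n) x‖ := norm_nonneg _
    nlinarith [norm_nonneg (A ((A ^ n) x))]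
  have hanti : Antitone d := antitone_nat_of_succ_le hdsucc
  have hbdd : BddBelow (Set.range d) := ⟨0, fun r ⟨n, hn⟩ => hn ▸ hdnn n⟩
  set δ : ℝ := ⨅ n, d n with hδ
  have hdlim : Filter.Tendsto d Filter.atTop (nhds δ) := tendsto_atTop_ciInf hanti hbdd
  have hδle : ∀ n, δ ≤ d n := fun n => ciInf_le hbdd n
  set u : ℕ → H := fun l => (A ^ (2 * l)) x with hu
  have hinner : ∀ n k, ⟪u n, u k⟫ = ((d (n + k) : ℝ) : ℂ) := by
    intro n k
    rw [hu]
    simp only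
    rw [ass_sa_inner_pow hA, ass_pow_apply]
    have : 2 * n + 2 * k = 2 * (n + k) := by ring
    rw [this, ass_inner_even_pow hA]
  have hdist : ∀ n k, dist (u n) (u k) ^ 2 = d (2 * n) - 2 * d (n + k) + d (2 * k) := by
    intro n k
    rw [dist_eq_norm, @norm_sub_sq ℂ]
    have h1 : ‖u n‖ ^ 2 = d (2 * n) := by rw [hu, hd]
    have h2 : ‖u k‖ ^ 2 = d (2 * k) := by rw [hu, hd]
    have h3 : RCLike.re ⟪u n, u k⟫ = d (n + k) := by
      rw [hinner n k]; simp
    rw [h1, h2, h3]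
  have hcauchy : CauchySeq u := by
    rw [Metric.cauchySeq_iff']
    intro ε hε
    obtain ⟨N, hN⟩ := (Filter.tendsto_atTop'.1 hdlim) (Set.Iio (δ + ε ^ 2)) (by
      exact Iio_mem_nhds (by nlinarith))
    refine ⟨N, fun n hn => ?_⟩
    have hds : dist (u n) (u N) ^ 2 ≤ d (2 * N) - δ := by
      rw [hdist n N]
      have h1 : d (2 * n) ≤ d (n + N) := hanti (by omega)
      have h2 : δ ≤ d (n + N) := hδle _
      nlinarith
    have h4 : d (2 * N) < δ + ε ^ 2 := hN (2 * N) (by omega)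
    have h5 : dist (u n) (u N) ^ 2 < ε ^ 2 := by nlinarith
    nlinarith [dist_nonneg (x := u n) (y := u N), sq_nonneg (dist (u n) (u N) - ε)]
  obtain ⟨z, hz⟩ := cauchySeq_tendsto_of_complete hcauchy
  have hA2z : (A ^ 2) z = z := by
    have h1 : Filter.Tendsto (fun l => (A ^ 2) (u l)) Filter.atTop (nhds ((A ^ 2) z)) :=
      ((A ^ 2).continuous.tendsto z).comp hz
    have h2 : (fun l => (A ^ 2) (u l)) = fun l => u (l + 1) := by
      funext l
      rw [hu]
      simp only
      rw [ass_pow_apply]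
      congr 1; ring
    rw [h2] at h1
    have h3 : Filter.Tendsto (fun l => u (l + 1)) Filter.atTop (nhds z) :=
      hz.comp (Filter.tendsto_add_atTop_nat 1)
    exact tendsto_nhds_unique h1 h3
  have hxz : ⟪x, z⟫ = 0 := by
    have hzsplit : z = (2:ℂ)⁻¹ • (z + A z) + (2:ℂ)⁻¹ • (z - A z) := by
      module
    have hAAz : A (A z) = z := by
      have h : (A ^ 2) z = A (A z) := by rw [sq]; rfl
      rw [← h, hA2z]
    have hplus : A ((2:ℂ)⁻¹ • (z + A z)) = (2:ℂ)⁻¹ • (z + A z) := by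
      rw [map_smul, map_add, hAAz]
      congr 1
      abel
    have hminus : A ((2:ℂ)⁻¹ • (z - A z)) = -((2:ℂ)⁻¹ • (z - A z)) := by
      rw [map_smul, map_sub, hAAz, ← smul_neg]
      congr 1
      abel
    calc ⟪x, z⟫ = ⟪x, (2:ℂ)⁻¹ • (z + A z)⟫ + ⟪x, (2:ℂ)⁻¹ • (z - A z)⟫ := by
          rw [← inner_add_right, ← hzsplit]
      _ = 0 := by rw [hp _ hplus, hm _ hminus, add_zero]
  have hdz : Filter.Tendsto (fun l => ⟪x, u l⟫) Filter.atTop (nhds 0) := by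
    have := Filter.Tendsto.inner (𝕜 := ℂ)
      (tendsto_const_nhds (x := x) (f := Filter.atTop)) hz
    rwa [hxz] at this
  have hd0 : Filter.Tendsto d Filter.atTop (nhds 0) := by
    have h1 : ∀ l, d l = (⟪x, u l⟫).re := by
      intro l
      rw [hu]
      simp only
      rw [ass_inner_even_pow hA, Complex.ofReal_re]
    have h2 : Filter.Tendsto (fun l => (⟪x, u l⟫).re) Filter.atTop (nhds 0) := by
      have := (Complex.continuous_re.tendsto 0).comp hdz
      simpa [Function.comp_def] using this
    exact h2.congr fun l => (h1 l).symm
  have hnorm0 : Filter.Tendsto (fun l => ‖(A ^ l) x‖) Filter.atTop (nhds 0) := by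
    have h1 := (Real.continuous_sqrt.tendsto 0).comp hd0
    simp only [Function.comp_def, Real.sqrt_zero] at h1
    refine h1.congr fun l => ?_
    rw [hd]
    simp only
    rw [Real.sqrt_sq (norm_nonneg _)]
  refine squeeze_zero_norm (a := fun l => ‖(A ^ l) x‖ * ‖x‖) (fun l => ?_) (by
    simpa using hnorm0.mul (tendsto_const_nhds (x := ‖x‖)))
  have h1 : (2 * l + 1) = l + (l + 1) := by ring
  have h2 : ⟪x, (A ^ (2 * l + 1)) x⟫ = ⟪(A ^ l) x, (A ^ (l + 1)) x⟫ := by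
    rw [ass_sa_inner_pow hA l, ass_pow_apply, h1]
  rw [h2]
  calc ‖⟪(A ^ l) x, (A ^ (l + 1)) x⟫‖ ≤ ‖(A ^ l) x‖ * ‖(A ^ (l + 1)) x‖ :=
        norm_inner_le_norm _ _
    _ ≤ ‖(A ^ l) x‖ * ‖x‖ := by
        refine mul_le_mul_of_nonneg_left ?_ (norm_nonneg _)
        have h3 : d (l + 1) ≤ d 0 := hanti (Nat.zero_le (l + 1))
        have h4 : d 0 = ‖x‖ ^ 2 := by rw [hd]; simp
        rw [hd] at h3
        simp only [pow_zero, ContinuousLinearMap.one_apply] at h3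
        nlinarith [norm_nonneg ((A ^ (l + 1)) x), norm_nonneg x]

section Projections
variable {P Q : H →L[ℂ] H}

lemma ass_sq_add_sq (hP : IsIdempotentElem P) (hQ : IsIdempotentElem Q) :
    (P - Q) * (P - Q) + (1 - P - Q) * (1 - P - Q) = 1 := by
  have expand : (P - Q) * (P - Q) + (1 - P - Q) * (1 - P - Q)
      = (P * P - P) + (Q * Q - Q) + ((P * P - P) + (Q * Q - Q)) + 1 := by noncomm_ring
  rw [expand, hP.eq, hQ.eq]
  simp

lemma ass_anticomm (hP : IsIdempotentElem P) (hQ : IsIdempotentElem Q) :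
    (1 - P - Q) * (P - Q) = -((P - Q) * (1 - P - Q)) := by
  have e1 : (1 - P - Q) * (P - Q) = P - Q - P * P + P * Q - Q * P + Q * Q := by noncomm_ring
  have e2 : (P - Q) * (1 - P - Q) = P - P * P - P * Q - Q + Q * P + Q * Q := by noncomm_ring
  rw [e1, e2, hP.eq, hQ.eq]
  noncomm_ring

lemma ass_inner_self (x : H) : ⟪x, x⟫ = ((‖x‖ ^ 2 : ℝ) : ℂ) := by
  rw [inner_self_eq_norm_sq_to_K]; norm_cast

lemma ass_sa_inner {A : H →L[ℂ] H} (hA : IsSelfAdjoint A) (x y : H) :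
    ⟪x, A y⟫ = ⟪A x, y⟫ := by
  have h : adjoint A = A := ContinuousLinearMap.isSelfAdjoint_iff'.1 hA
  rw [← ContinuousLinearMap.adjoint_inner_left A, h]

lemma ass_contraction (hPsa : IsSelfAdjoint P) (hPi : IsIdempotentElem P)
    (hQsa : IsSelfAdjoint Q) (hQi : IsIdempotentElem Q) (x : H) :
    ‖(P - Q) x‖ ≤ ‖x‖ := by
  set A := P - Q
  set B := 1 - P - Q with hB
  have hAsa : IsSelfAdjoint A := hPsa.sub hQsa
  have hone : IsSelfAdjoint (1 : H →L[ℂ] H) := star_one _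
  have hBsa : IsSelfAdjoint B := (hone.sub hPsa).sub hQsa
  have key : ((‖A x‖ ^ 2 + ‖B x‖ ^ 2 : ℝ) : ℂ) = ((‖x‖ ^ 2 : ℝ) : ℂ) := by
    rw [Complex.ofReal_add, ← ass_inner_self (A x), ← ass_inner_self (B x), ← ass_inner_self x]
    rw [← ass_sa_inner hAsa x (A x), ← ass_sa_inner hBsa x (B x), ← inner_add_right]
    have h := ass_sq_add_sq hPi hQi
    have hx2 : A (A x) + B (B x) = x := by
      calc A (A x) + B (B x) = (A * A + B * B) x := by
            rw [ContinuousLinearMap.add_apply]; rfl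
        _ = (1 : H →L[ℂ] H) x := by rw [h]
        _ = x := rfl
    rw [hx2]
  have key2 : ‖A x‖ ^ 2 + ‖B x‖ ^ 2 = ‖x‖ ^ 2 := by exact_mod_cast key
  nlinarith [norm_nonneg (A x), norm_nonneg (B x), norm_nonneg x]

lemma ass_range_mem (hPi : IsIdempotentElem P) {x : H} (hx : x ∈ LinearMap.range (P : H →ₗ[ℂ] H)) :
    P x = x := by
  obtain ⟨y, rfl⟩ := hx
  have := congrFun (congrArg (fun T : H →L[ℂ] H => (T : H → H)) hPi.eq) y
  exact this

lemma ass_eigen_plus (hPsa : IsSelfAdjoint P) (hPi : IsIdempotentElem P)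
    (hQsa : IsSelfAdjoint Q) (hQi : IsIdempotentElem Q) :
    (LinearMap.ker (Q : H →ₗ[ℂ] H) ⊓ LinearMap.range (P : H →ₗ[ℂ] H) : Submodule ℂ H) = LinearMap.ker (((P - Q) - 1 : H →L[ℂ] H) : H →ₗ[ℂ] H) := by
  ext x
  simp only [Submodule.mem_inf, LinearMap.mem_ker, ContinuousLinearMap.coe_sub',
    Pi.sub_apply, ContinuousLinearMap.one_apply, ContinuousLinearMap.coe_coe]
  constructor
  · rintro ⟨hxQ, hxP⟩
    have := ass_range_mem hPi hxP
    rw [this, hxQ]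
    simp
  · intro hx
    have hx' : P x - Q x = x := by
      have : P x - Q x - x = 0 := hx
      linear_combination (norm := abel) this
    have hiP : ⟪x, P x⟫ = ((‖P x‖ ^ 2 : ℝ) : ℂ) := by
      conv_lhs => rw [show P x = P (P x) by
        rw [show P (P x) = (P * P) x from rfl, hPi.eq]]
      rw [ass_sa_inner hPsa, ass_inner_self]
    have hiQ : ⟪x, Q x⟫ = ((‖Q x‖ ^ 2 : ℝ) : ℂ) := by
      conv_lhs => rw [show Q x = Q (Q x) by
        rw [show Q (Q x) = (Q * Q) x from rfl, hQi.eq]]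
      rw [ass_sa_inner hQsa, ass_inner_self]
    have heq : ((‖P x‖ ^ 2 - ‖Q x‖ ^ 2 : ℝ) : ℂ) = ((‖x‖ ^ 2 : ℝ) : ℂ) := by
      rw [Complex.ofReal_sub, ← hiP, ← hiQ, ← ass_inner_self x, ← inner_sub_right, hx']
    have heq' : ‖P x‖ ^ 2 - ‖Q x‖ ^ 2 = ‖x‖ ^ 2 := by exact_mod_cast heq
    have hpyth : ‖x‖ ^ 2 = ‖P x‖ ^ 2 + ‖x - P x‖ ^ 2 := by
      have horto : ⟪P x, x - P x⟫ = 0 := by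
        have h1 : ⟪P x, x - P x⟫ = ⟪P x, x⟫ - ⟪P x, P x⟫ := inner_sub_right _ _ _
        have h2 : ⟪P x, P x⟫ = ⟪P x, x⟫ := by
          have h3 := ass_sa_inner hPsa (P x) x
          rw [h3, show P (P x) = (P * P) x from rfl, hPi.eq]
        rw [h1, h2, sub_self]
      have := norm_add_sq (𝕜 := ℂ) (P x) (x - P x)
      rw [horto] at this
      simp only [map_zero, mul_zero, add_zero, zero_add] at this
      rw [show P x + (x - P x) = x by abel] at this
      linarith [this]
    have hQ0 : ‖Q x‖ ^ 2 = 0 ∧ ‖x - P x‖ ^ 2 = 0 := by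
      constructor <;> nlinarith [sq_nonneg ‖Q x‖, sq_nonneg ‖x - P x‖]
    have hQx : Q x = 0 := by
      have := hQ0.1
      rw [pow_eq_zero_iff (by norm_num)] at this
      exact norm_eq_zero.1 this
    have hPx : P x = x := by
      have := hQ0.2
      rw [pow_eq_zero_iff (by norm_num)] at this
      have := norm_eq_zero.1 this
      have : x - P x = 0 := this
      linear_combination (norm := abel) -this
    exact ⟨hQx, ⟨x, hPx⟩⟩

lemma ass_eigen_minus (hPsa : IsSelfAdjoint P) (hPi : IsIdempotentElem P)
    (hQsa : IsSelfAdjoint Q) (hQi : IsIdempotentElem Q) :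
    (LinearMap.ker (P : H →ₗ[ℂ] H) ⊓ LinearMap.range (Q : H →ₗ[ℂ] H) : Submodule ℂ H) = LinearMap.ker (((P - Q) + 1 : H →L[ℂ] H) : H →ₗ[ℂ] H) := by
  have h := ass_eigen_plus hQsa hQi hPsa hPi
  rw [h]
  ext x
  simp only [LinearMap.mem_ker, ContinuousLinearMap.coe_sub', ContinuousLinearMap.coe_add',
    Pi.sub_apply, Pi.add_apply, ContinuousLinearMap.one_apply, ContinuousLinearMap.coe_coe]
  constructor <;> intro hx
  · linear_combination (norm := abel) -hx
  · linear_combination (norm := abel) -hx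

end Projections

/-- An operator that factors as a product of two Hilbert–Schmidt operators. -/
def ass_TC (W : H →L[ℂ] H) : Prop :=
  ∃ X Y : H →L[ℂ] H, IsHilbertSchmidt X ∧ IsHilbertSchmidt Y ∧ W = X * Y

lemma ass_TC.mul_left {W : H →L[ℂ] H} (hW : ass_TC W) (C : H →L[ℂ] H) : ass_TC (C * W) := by
  obtain ⟨X, Y, hX, hY, rfl⟩ := hW
  exact ⟨C * X, Y, IsHilbertSchmidt.mul_left C hX, hY, (mul_assoc C X Y).symm⟩

lemma ass_TC.mul_right {W : H →L[ℂ] H} (hW : ass_TC W) (C : H →L[ℂ] H) : ass_TC (W * C) := by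
  obtain ⟨X, Y, hX, hY, rfl⟩ := hW
  exact ⟨X, Y * C, hX, IsHilbertSchmidt.mul_right C hY, mul_assoc X Y C⟩

lemma ass_TC.summable {W : H →L[ℂ] H} (hW : ass_TC W) {ι : Type*} (e : HilbertBasis ι ℂ H) :
    Summable fun i => ⟪e i, W (e i)⟫ := by
  obtain ⟨X, Y, hX, hY, rfl⟩ := hW
  exact ass_traceclass_summable e hX hY

lemma ass_TC.tr_indep {W : H →L[ℂ] H} (hW : ass_TC W) {ι κ : Type*}
    (e : HilbertBasis ι ℂ H) (f : HilbertBasis κ ℂ H) :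
    ∑' i, ⟪e i, W (e i)⟫ = ∑' j, ⟪f j, W (f j)⟫ := by
  obtain ⟨X, Y, hX, hY, rfl⟩ := hW
  rw [ass_cyclic e f hX hY, ass_cyclic f f hY hX]

lemma ass_TC.tr_cyclic {W : H →L[ℂ] H} (hW : ass_TC W) {ι : Type*}
    (e : HilbertBasis ι ℂ H) (C : H →L[ℂ] H) :
    ∑' i, ⟪e i, (W * C) (e i)⟫ = ∑' i, ⟪e i, (C * W) (e i)⟫ := by
  obtain ⟨X, Y, hX, hY, rfl⟩ := hW
  rw [mul_assoc X Y C, ass_cyclic e e hX (IsHilbertSchmidt.mul_right C hY),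
    mul_assoc Y C X, ass_cyclic e e hY (IsHilbertSchmidt.mul_left C hX),
    ← mul_assoc C X Y]

lemma ass_TC_pow {A X Y : H →L[ℂ] H} (hX : IsHilbertSchmidt X) (hY : IsHilbertSchmidt Y)
    {m : ℕ} (hXY : A ^ (2 * m + 1) = X * Y) {n : ℕ} (hn : 2 * m + 1 ≤ n) : ass_TC (A ^ n) := by
  have h : A ^ n = A ^ (n - (2 * m + 1)) * (X * Y) := by
    rw [← hXY, ← pow_add]
    congr 1
    omega
  refine ⟨A ^ (n - (2 * m + 1)) * X, Y, IsHilbertSchmidt.mul_left _ hX, hY, ?_⟩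
  rw [h, mul_assoc]

lemma ass_comm_even {A B : H →L[ℂ] H} (hBA : B * A = -(A * B)) (k : ℕ) :
    B * A ^ (2 * k) = A ^ (2 * k) * B := by
  have h2 : B * (A * A) = (A * A) * B := by
    rw [← mul_assoc, hBA, neg_mul, mul_assoc, hBA, mul_neg, neg_neg, ← mul_assoc]
  induction k with
  | zero => simp
  | succ k ih =>
    have h1 : A ^ (2 * (k + 1)) = A ^ (2 * k) * (A * A) := by
      rw [show 2 * (k + 1) = 2 * k + 1 + 1 by ring, pow_succ, pow_succ, mul_assoc]
    rw [h1, ← mul_assoc, ih, mul_assoc, h2, ← mul_assoc]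

lemma ass_anticomm_odd {A B : H →L[ℂ] H} (hBA : B * A = -(A * B)) (k : ℕ) :
    B * A ^ (2 * k + 1) = -(A ^ (2 * k + 1) * B) := by
  have h1 : A ^ (2 * k + 1) = A ^ (2 * k) * A := by rw [← pow_succ]
  rw [h1, ← mul_assoc, ass_comm_even hBA k, mul_assoc, hBA]
  noncomm_ring

lemma ass_trace_step {ι : Type*} (e : HilbertBasis ι ℂ H) {A B X Y : H →L[ℂ] H}
    (hX : IsHilbertSchmidt X) (hY : IsHilbertSchmidt Y) {m : ℕ}
    (hXY : A ^ (2 * m + 1) = X * Y) (hsq : A * A + B * B = 1)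
    (hBA : B * A = -(A * B)) {l : ℕ} (hl : m ≤ l) :
    ∑' i, ⟪e i, (A ^ (2 * l + 1)) (e i)⟫ = ∑' i, ⟪e i, (A ^ (2 * (l + 1) + 1)) (e i)⟫ := by
  have hTCl : ass_TC (A ^ (2 * l + 1)) := ass_TC_pow hX hY hXY (by omega)
  have hTCl1 : ass_TC (A ^ (2 * (l + 1) + 1)) := ass_TC_pow hX hY hXY (by omega)
  set U : H →L[ℂ] H := A ^ (2 * l + 1) * B with hU
  have hTCU : ass_TC U := hTCl.mul_right B
  have hTCUB : ass_TC (U * B) := hTCU.mul_right B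
  have hop : A ^ (2 * l + 1) = A ^ (2 * (l + 1) + 1) + U * B := by
    have h0 : A ^ (2 * l + 1) * (A * A + B * B) = A ^ (2 * l + 1) := by rw [hsq, mul_one]
    have e1 : A ^ (2 * l + 1) * (A * A) = A ^ (2 * (l + 1) + 1) := by
      rw [← mul_assoc, ← pow_succ, ← pow_succ]
      congr 1
    have e2 : A ^ (2 * l + 1) * (B * B) = U * B := by rw [hU, mul_assoc]
    rw [← h0, mul_add, e1, e2]
  have hsplit : ∀ i, ⟪e i, (A ^ (2 * l + 1)) (e i)⟫
      = ⟪e i, (A ^ (2 * (l + 1) + 1)) (e i)⟫ + ⟪e i, (U * B) (e i)⟫ := by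
    intro i
    conv_lhs => rw [hop]
    rw [ContinuousLinearMap.add_apply, inner_add_right]
  have hzero : ∑' i, ⟪e i, (U * B) (e i)⟫ = 0 := by
    have hcyc := hTCU.tr_cyclic e B
    have hBU : B * U = -(U * B) := by
      rw [hU, ← mul_assoc, ass_anticomm_odd hBA l]
      noncomm_ring
    rw [hBU] at hcyc
    have hneg : ∀ i, ⟪e i, (-(U * B)) (e i)⟫ = -⟪e i, (U * B) (e i)⟫ := by
      intro i
      rw [ContinuousLinearMap.neg_apply, inner_neg_right]
    rw [tsum_congr hneg, tsum_neg] at hcyc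
    linear_combination hcyc / 2
  calc ∑' i, ⟪e i, (A ^ (2 * l + 1)) (e i)⟫
      = ∑' i, (⟪e i, (A ^ (2 * (l + 1) + 1)) (e i)⟫ + ⟪e i, (U * B) (e i)⟫) :=
        tsum_congr hsplit
    _ = ∑' i, ⟪e i, (A ^ (2 * (l + 1) + 1)) (e i)⟫ + ∑' i, ⟪e i, (U * B) (e i)⟫ :=
        Summable.tsum_add (hTCl1.summable e) (hTCUB.summable e)
    _ = ∑' i, ⟪e i, (A ^ (2 * (l + 1) + 1)) (e i)⟫ := by rw [hzero, add_zero]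

lemma ass_trace_const {ι : Type*} (e : HilbertBasis ι ℂ H) {A B X Y : H →L[ℂ] H}
    (hX : IsHilbertSchmidt X) (hY : IsHilbertSchmidt Y) {m : ℕ}
    (hXY : A ^ (2 * m + 1) = X * Y) (hsq : A * A + B * B = 1)
    (hBA : B * A = -(A * B)) {l : ℕ} (hl : m ≤ l) :
    ∑' i, ⟪e i, (A ^ (2 * l + 1)) (e i)⟫ = ∑' i, ⟪e i, (A ^ (2 * m + 1)) (e i)⟫ := by
  induction l, hl using Nat.le_induction with
  | base => rfl
  | succ l hl ih => rw [← ih, ← ass_trace_step e hX hY hXY hsq hBA hl]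

lemma ass_findim {T : H →L[ℂ] H} (hT : IsHilbertSchmidt T) {V : Submodule ℂ H}
    (hVc : IsClosed (V : Set H)) (hfix : ∀ x ∈ V, ‖T x‖ = ‖x‖) :
    FiniteDimensional ℂ V := by
  by_contra hinf
  haveI : CompleteSpace V := hVc.completeSpace_coe
  obtain ⟨s, bV, hbV⟩ := exists_hilbertBasis ℂ ↥V
  by_cases hsf : s.Finite
  · have h1 : (Submodule.span ℂ (Set.range ⇑bV)).topologicalClosure = ⊤ := bV.dense_span
    have h2 : (Set.range ⇑bV).Finite := by
      rw [hbV, Subtype.range_coe]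
      exact hsf
    haveI h3 : FiniteDimensional ℂ (Submodule.span ℂ (Set.range ⇑bV)) :=
      FiniteDimensional.span_of_finite ℂ h2
    have h4 : IsClosed ((Submodule.span ℂ (Set.range ⇑bV) : Submodule ℂ V) : Set V) :=
      Submodule.closed_of_finiteDimensional _
    rw [h4.submodule_topologicalClosure_eq] at h1
    haveI h5 : FiniteDimensional ℂ (⊤ : Submodule ℂ V) := h1 ▸ h3
    exact hinf (Submodule.topEquiv.finiteDimensional)
  · haveI := Set.infinite_coe_iff.2 hsf
    set f := Infinite.natEmbedding ↥s with hf
    set g : ℕ → H := fun n => ((bV (f n) : ↥V) : H) with hg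
    have hgmem : ∀ n, g n ∈ V := fun n => SetLike.coe_mem _
    have horthV : Orthonormal ℂ fun n => bV (f n) := bV.orthonormal.comp f f.injective
    have horth : Orthonormal ℂ g := by
      rw [orthonormal_iff_ite]
      intro i j
      have := orthonormal_iff_ite.1 horthV i j
      rwa [Submodule.coe_inner] at this
    have hg' : Orthonormal ℂ ((↑) : Set.range g → H) := horth.toSubtypeRange
    obtain ⟨w, b, hsw, hb⟩ := hg'.exists_hilbertBasis_extension
    have hsum := hT.summable_basis b
    have htend := hsum.tendsto_cofinite_zero
    have hfin : {i : ↥w | ¬ ‖T (b i)‖ ^ 2 < 1}.Finite := by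
      have h0 := htend (Iio_mem_nhds (by norm_num : (0:ℝ) < 1))
      rw [Filter.mem_map, Filter.mem_cofinite] at h0
      exact h0
    set idx : ℕ → ↥w := fun n => ⟨g n, hsw (Set.mem_range_self n)⟩ with hidx
    have hginj : Function.Injective g := horth.linearIndependent.injective
    have hidxinj : Function.Injective idx := by
      intro a b hab
      have h2 : (idx a).val = (idx b).val := by rw [hab]
      exact hginj h2
    have hval : ∀ n, ‖T (b (idx n))‖ ^ 2 = 1 := by
      intro n
      have h1 : b (idx n) = g n := by rw [hb]
      rw [h1, hfix _ (hgmem n), horth.1 n]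
      norm_num
    have hsub : Set.range idx ⊆ {i : ↥w | ¬ ‖T (b i)‖ ^ 2 < 1} := by
      rintro _ ⟨n, rfl⟩
      simp only [Set.mem_setOf_eq, hval n]
      norm_num
    exact absurd (hfin.subset hsub) (Set.infinite_range_of_injective hidxinj)

lemma ass_pow_fix {A : H →L[ℂ] H} {x : H} (h : A x = x) (n : ℕ) : (A ^ n) x = x := by
  induction n with
  | zero => simp
  | succ n ih =>
    have h1 : (A ^ (n + 1)) x = A ((A ^ n) x) := by rw [pow_succ']; rfl
    rw [h1, ih, h]

lemma ass_pow_negfix {A : H →L[ℂ] H} {x : H} (h : A x = -x) (k : ℕ) :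
    (A ^ (2 * k + 1)) x = -x := by
  induction k with
  | zero => simpa using h
  | succ k ih =>
    have h1 : (A ^ (2 * (k + 1) + 1)) x = A (A ((A ^ (2 * k + 1)) x)) := by
      rw [show 2 * (k + 1) + 1 = 2 * k + 1 + 1 + 1 by ring, pow_succ', pow_succ']; rfl
    rw [h1, ih, show A (-x) = x by rw [map_neg, h, neg_neg], h]

lemma ass_pow_norm_anti {A : H →L[ℂ] H} (hc : ∀ y, ‖A y‖ ≤ ‖y‖) (x : H) :
    ∀ {n k : ℕ}, n ≤ k → ‖(A ^ k) x‖ ≤ ‖(A ^ n) x‖ := by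
  have hstep : ∀ j : ℕ, ‖(A ^ (j + 1)) x‖ ≤ ‖(A ^ j) x‖ := by
    intro j
    have h1 : (A ^ (j + 1)) x = A ((A ^ j) x) := by rw [pow_succ']; rfl
    rw [h1]
    exact hc _
  intro n k hnk
  induction k with
  | zero => simp_all
  | succ k ih =>
    rcases Nat.lt_or_ge n (k + 1) with h | h
    · exact le_trans (hstep k) (ih (by omega))
    · have : n = k + 1 := by omega
      subst this
      rfl

end ASS

section MainProof
variable {H : Type*} [NormedAddCommGroup H] [InnerProductSpace ℂ H] [CompleteSpace H]
local notation "⟪" x ", " y "⟫" => @inner ℂ _ _ x y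

theorem trace_odd_power_eq_index' 
    (P Q : H →L[ℂ] H)
    (hPsa : IsSelfAdjoint P) (hPidem : IsIdempotentElem P)
    (hQsa : IsSelfAdjoint Q) (hQidem : IsIdempotentElem Q)
    (m : ℕ) (hTC : IsTraceClass ((P - Q) ^ (2 * m + 1))) :
    ∀ l : ℕ, m ≤ l → ∀ e : HilbertBasis ℕ ℂ H,
      Summable (fun i => (inner ℂ (e i) (((P - Q) ^ (2 * l + 1)) (e i)) : ℂ)) ∧
      ∑' i, (inner ℂ (e i) (((P - Q) ^ (2 * l + 1)) (e i)) : ℂ) = (pairIndex P Q : ℂ) := by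
  classical
  intro l hl e
  set A : H →L[ℂ] H := P - Q with hAdef
  set B : H →L[ℂ] H := 1 - P - Q with hBdef
  have hAsa : IsSelfAdjoint A := hPsa.sub hQsa
  have hone : IsSelfAdjoint (1 : H →L[ℂ] H) := star_one _
  have hBsa : IsSelfAdjoint B := (hone.sub hPsa).sub hQsa
  have hsq : A * A + B * B = 1 := ass_sq_add_sq hPidem hQidem
  have hBA : B * A = -(A * B) := ass_anticomm hPidem hQidem
  have hcontr : ∀ x, ‖A x‖ ≤ ‖x‖ := ass_contraction hPsa hPidem hQsa hQidem
  obtain ⟨X, Y, hX, hY, hXYc⟩ := hTC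
  have hXY : A ^ (2 * m + 1) = X * Y := hXYc
  have hTCpow : ∀ n, 2 * m + 1 ≤ n → ass_TC (A ^ n) := fun n hn => ass_TC_pow hX hY hXY hn
  have hTCl : ass_TC (A ^ (2 * l + 1)) := hTCpow _ (by omega)
  refine ⟨hTCl.summable e, ?_⟩
  -- trace at basis e is constant in l
  have hconst := ass_trace_const e hX hY hXY hsq hBA hl
  -- eigenspaces
  set Vp : Submodule ℂ H := LinearMap.ker ((A - 1 : H →L[ℂ] H) : H →ₗ[ℂ] H) with hVp
  set Vm : Submodule ℂ H := LinearMap.ker ((A + 1 : H →L[ℂ] H) : H →ₗ[ℂ] H) with hVm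
  have hVpmem : ∀ x, x ∈ Vp ↔ A x = x := by
    intro x
    rw [hVp, LinearMap.mem_ker]
    constructor
    · intro h
      have : A x - x = 0 := h
      linear_combination (norm := abel) this
    · intro h
      show A x - x = 0
      rw [h, sub_self]
  have hVmmem : ∀ x, x ∈ Vm ↔ A x = -x := by
    intro x
    rw [hVm, LinearMap.mem_ker]
    constructor
    · intro h
      have : A x + x = 0 := h
      linear_combination (norm := abel) this
    · intro h
      show A x + x = 0
      rw [h, neg_add_cancel]
  have hVpc : IsClosed (Vp : Set H) := ContinuousLinearMap.isClosed_ker _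
  have hVmc : IsClosed (Vm : Set H) := ContinuousLinearMap.isClosed_ker _
  have hApow_hs : IsHilbertSchmidt (A ^ (2 * m + 1)) := by
    rw [hXY]
    exact IsHilbertSchmidt.mul_left X hY
  haveI hfdp : FiniteDimensional ℂ Vp := by
    refine ass_findim hApow_hs hVpc fun x hx => ?_
    rw [ass_pow_fix ((hVpmem x).1 hx)]
  haveI hfdm : FiniteDimensional ℂ Vm := by
    refine ass_findim hApow_hs hVmc fun x hx => ?_
    rw [ass_pow_negfix ((hVmmem x).1 hx), norm_neg]
  set np := Module.finrank ℂ Vp with hnp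
  set nm := Module.finrank ℂ Vm with hnm
  have hindex : (pairIndex P Q : ℂ) = (np : ℂ) - (nm : ℂ) := by
    have h1 : (LinearMap.ker (Q : H →ₗ[ℂ] H) ⊓ LinearMap.range (P : H →ₗ[ℂ] H) : Submodule ℂ H) = Vp := by
      rw [hVp, hAdef]
      exact ass_eigen_plus hPsa hPidem hQsa hQidem
    have h2 : (LinearMap.ker (P : H →ₗ[ℂ] H) ⊓ LinearMap.range (Q : H →ₗ[ℂ] H) : Submodule ℂ H) = Vm := by
      rw [hVm, hAdef]
      exact ass_eigen_minus hPsa hPidem hQsa hQidem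
    rw [pairIndex, h1, h2]
    push_cast
    ring
  -- adapted orthonormal family
  set u := stdOrthonormalBasis ℂ Vp with hu
  set v := stdOrthonormalBasis ℂ Vm with hv
  set g : Fin np ⊕ Fin nm → H :=
    Sum.elim (fun i => ((u i : Vp) : H)) (fun j => ((v j : Vm) : H)) with hgdef
  have hgp : ∀ i, g (Sum.inl i) ∈ Vp := fun i => SetLike.coe_mem _
  have hgm : ∀ j, g (Sum.inr j) ∈ Vm := fun j => SetLike.coe_mem _
  have hcross : ∀ x y : H, A x = x → A y = -y → ⟪x, y⟫ = 0 := by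
    intro x y hx hy
    have h1 : ⟪x, y⟫ = ⟪A x, y⟫ := by rw [hx]
    have h2 : ⟪A x, y⟫ = ⟪x, A y⟫ := by rw [← ass_sa_inner hAsa]
    have h3 : ⟪x, A y⟫ = -⟪x, y⟫ := by rw [hy, inner_neg_right]
    have h4 : ⟪x, y⟫ = -⟪x, y⟫ := by
      calc ⟪x, y⟫ = ⟪A x, y⟫ := h1
        _ = ⟪x, A y⟫ := h2
        _ = -⟪x, y⟫ := h3
    linear_combination h4 / 2
  have horthg : Orthonormal ℂ g := by
    rw [orthonormal_iff_ite]
    rintro (i | i) (j | j)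
    · have h0 := orthonormal_iff_ite.1 u.orthonormal i j
      rw [Submodule.coe_inner] at h0
      simp only [Sum.inl.injEq]
      exact h0
    · rw [if_neg (by simp)]
      exact hcross _ _ ((hVpmem _).1 (hgp i)) ((hVmmem _).1 (hgm j))
    · rw [if_neg (by simp)]
      have h0 : (inner ℂ (g (Sum.inl j)) (g (Sum.inr i)) : ℂ) = 0 :=
        hcross _ _ ((hVpmem _).1 (hgp j)) ((hVmmem _).1 (hgm i))
      rw [← inner_conj_symm, h0, map_zero]
    · have h0 := orthonormal_iff_ite.1 v.orthonormal i j
      rw [Submodule.coe_inner] at h0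
      simp only [Sum.inr.injEq]
      exact h0
  have hginj : Function.Injective g := horthg.linearIndependent.injective
  obtain ⟨w, b, hsw, hb⟩ := horthg.toSubtypeRange.exists_hilbertBasis_extension
  set S : Set H := Set.range g with hS
  set sIdx : Set ↥w := {i : ↥w | (i : H) ∈ S} with hsIdx
  -- the sum over the eigen-part
  have heigen : ∀ k : ℕ, ∑' i : sIdx, ⟪((i : ↥w) : H), (A ^ (2 * k + 1)) ((i : ↥w) : H)⟫
      = (np : ℂ) - (nm : ℂ) := by
    intro k
    -- equivalence between Fin np ⊕ Fin nm and sIdx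
    have hmemS : ∀ a : Fin np ⊕ Fin nm, g a ∈ S := fun a => Set.mem_range_self a
    set EE : (Fin np ⊕ Fin nm) → sIdx :=
      fun a => ⟨⟨g a, hsw (hmemS a)⟩, hmemS a⟩ with hEE
    have hEEbij : Function.Bijective EE := by
      constructor
      · intro a b hab
        apply hginj
        have := congrArg (fun i : sIdx => ((i : ↥w) : H)) hab
        exact this
      · rintro ⟨⟨x, hxw⟩, hxS⟩
        obtain ⟨a, ha⟩ := hxS
        exact ⟨a, by simp [hEE, ha]⟩
    set EEq : (Fin np ⊕ Fin nm) ≃ sIdx := Equiv.ofBijective EE hEEbij with hEEq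
    rw [← EEq.tsum_eq]
    rw [tsum_fintype]
    have hterm : ∀ a : Fin np ⊕ Fin nm,
        ⟪((((EEq a) : ↥w)) : H), (A ^ (2 * k + 1)) ((((EEq a) : ↥w)) : H)⟫
        = Sum.elim (fun _ : Fin np => (1:ℂ)) (fun _ : Fin nm => (-1:ℂ)) a := by
      rintro (i | i)
      · have hx : (((EEq (Sum.inl i) : sIdx) : ↥w) : H) = g (Sum.inl i) := rfl
        rw [hx]
        have hfix := ass_pow_fix ((hVpmem _).1 (hgp i)) (2 * k + 1)
        rw [hfix, ass_inner_self]
        have hn : ‖g (Sum.inl i)‖ = 1 := horthg.1 (Sum.inl i)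
        rw [hn]
        norm_num
      · have hx : (((EEq (Sum.inr i) : sIdx) : ↥w) : H) = g (Sum.inr i) := rfl
        rw [hx]
        have hfix := ass_pow_negfix ((hVmmem _).1 (hgm i)) k
        rw [hfix, inner_neg_right, ass_inner_self]
        have hn : ‖g (Sum.inr i)‖ = 1 := horthg.1 (Sum.inr i)
        rw [hn]
        norm_num
    rw [Finset.sum_congr rfl fun a _ => hterm a]
    rw [Fintype.sum_sum_type]
    simp only [Sum.elim_inl, Sum.elim_inr, Finset.sum_const, Finset.card_univ,
      Fintype.card_fin, nsmul_eq_mul, mul_one, mul_neg_one]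
    ring
  -- orthogonality for the complement part
  have hperp : ∀ i : ↥w, (i : H) ∉ S →
      (∀ y, A y = y → ⟪(i : H), y⟫ = 0) ∧ (∀ y, A y = -y → ⟪(i : H), y⟫ = 0) := by
    intro i hiS
    have hbasis_orth : ∀ a : Fin np ⊕ Fin nm, ⟪(i : H), g a⟫ = 0 := by
      intro a
      set j : ↥w := ⟨g a, hsw (Set.mem_range_self a)⟩ with hj
      have hij : i ≠ j := by
        intro hij
        apply hiS
        rw [hij]
        exact Set.mem_range_self a
      have h0 := orthonormal_iff_ite.1 b.orthonormal i j
      rw [if_neg hij] at h0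
      have e1 : b i = (i : H) := by rw [hb]
      have e2 : b j = (j : H) := by rw [hb]
      show (inner ℂ ((i : ↥w) : H) ((j : ↥w) : H) : ℂ) = 0
      rw [← e1, ← e2]
      exact h0
    constructor
    · intro y hy
      have hyVp : y ∈ Vp := (hVpmem y).2 hy
      set y' : Vp := ⟨y, hyVp⟩ with hy'
      have hrepr := u.sum_repr y'
      have hyH : y = ∑ a : Fin np, u.repr y' a • ((u a : Vp) : H) := by
        have := congrArg (Submodule.subtype Vp) hrepr
        simp only [map_sum, map_smul] at this
        exact this.symm
      rw [hyH, inner_sum]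
      refine Finset.sum_eq_zero fun a _ => ?_
      rw [inner_smul_right]
      have := hbasis_orth (Sum.inl a)
      simp only [hgdef, Sum.elim_inl] at this
      rw [this, mul_zero]
    · intro y hy
      have hyVm : y ∈ Vm := (hVmmem y).2 hy
      set y' : Vm := ⟨y, hyVm⟩ with hy'
      have hrepr := v.sum_repr y'
      have hyH : y = ∑ a : Fin nm, v.repr y' a • ((v a : Vm) : H) := by
        have := congrArg (Submodule.subtype Vm) hrepr
        simp only [map_sum, map_smul] at this
        exact this.symm
      rw [hyH, inner_sum]
      refine Finset.sum_eq_zero fun a _ => ?_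
      rw [inner_smul_right]
      have := hbasis_orth (Sum.inr a)
      simp only [hgdef, Sum.elim_inr] at this
      rw [this, mul_zero]
  -- square-summability of A^(m+1) over the basis b
  have hYA : IsHilbertSchmidt (Y * A) := IsHilbertSchmidt.mul_right A hY
  have hpow2 : A ^ (2 * m + 2) = X * (Y * A) := by
    rw [← mul_assoc, ← hXY, ← pow_succ]
  have hdombound : ∀ z : H, ‖(A ^ (m + 1)) z‖ ^ 2 ≤ ‖adjoint X z‖ * ‖(Y * A) z‖ := by
    intro z
    have h1 : ⟪z, (A ^ (2 * (m + 1))) z⟫ = ((‖(A ^ (m + 1)) z‖ ^ 2 : ℝ) : ℂ) :=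
      ass_inner_even_pow hAsa (m + 1) z
    have h2 : (2 * (m + 1)) = 2 * m + 2 := by ring
    rw [h2] at h1
    calc ‖(A ^ (m + 1)) z‖ ^ 2 = ‖⟪z, (A ^ (2 * m + 2)) z⟫‖ := by
          rw [h1, Complex.norm_real, Real.norm_of_nonneg (by positivity)]
      _ = ‖⟪z, (X * (Y * A)) z⟫‖ := by rw [hpow2]
      _ ≤ ‖adjoint X z‖ * ‖(Y * A) z‖ := ass_diag_bound z
  have hsumA : Summable fun i : ↥w => ‖(A ^ (m + 1)) (b i)‖ ^ 2 :=
    Summable.of_nonneg_of_le (fun i => by positivity) (fun i => hdombound (b i))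
      (ass_prodnorm_summable b hX hYA)
  have hsumA' : Summable fun i : ↥w => ‖(A ^ (m + 1)) ((i : H))‖ ^ 2 := by
    refine hsumA.congr fun i => ?_
    rw [hb]
  -- dominated convergence over the complement
  set K : Set ↥w := sIdxᶜ with hK
  set F : ℕ → ↥K → ℂ :=
    fun k i => ⟪(((i : ↥w)) : H), (A ^ (2 * k + 1)) (((i : ↥w)) : H)⟫ with hF
  have hDCT : Filter.Tendsto (fun k => ∑' i : K, F k i) Filter.atTop (nhds 0) := by
    have hbsum : Summable fun i : K => ‖(A ^ (m + 1)) (((i : ↥w)) : H)‖ ^ 2 :=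
      (hsumA'.subtype K)
    have hpt : ∀ i : K, Filter.Tendsto (fun k => F k i) Filter.atTop (nhds 0) := by
      intro i
      have hiS : ((i : ↥w) : H) ∉ S := i.2
      obtain ⟨hp, hm'⟩ := hperp (i : ↥w) hiS
      exact ass_pointwise hAsa hcontr hp hm'
    have hbound : ∀ᶠ k in Filter.atTop, ∀ i : K,
        ‖F k i‖ ≤ ‖(A ^ (m + 1)) (((i : ↥w)) : H)‖ ^ 2 := by
      rw [Filter.eventually_atTop]
      refine ⟨m + 1, fun k hk i => ?_⟩
      set x : H := ((i : ↥w) : H)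
      have h1 : (2 * k + 1) = k + (k + 1) := by ring
      have h2 : F k i = ⟪(A ^ k) x, (A ^ (k + 1)) x⟫ := by
        rw [hF]
        simp only
        rw [ass_sa_inner_pow hAsa k, ass_pow_apply, h1]
      rw [h2]
      calc ‖⟪(A ^ k) x, (A ^ (k + 1)) x⟫‖ ≤ ‖(A ^ k) x‖ * ‖(A ^ (k + 1)) x‖ :=
            norm_inner_le_norm _ _
        _ ≤ ‖(A ^ (m + 1)) x‖ * ‖(A ^ (m + 1)) x‖ := by
            refine mul_le_mul (ass_pow_norm_anti hcontr x hk)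
              (ass_pow_norm_anti hcontr x (by omega)) (norm_nonneg _) (norm_nonneg _)
        _ = ‖(A ^ (m + 1)) x‖ ^ 2 := by ring
    have := tendsto_tsum_of_dominated_convergence hbsum hpt hbound
    simpa using this
  -- for k ≥ m the complement sum is constant
  set c : ℂ := ∑' i, ⟪e i, (A ^ (2 * m + 1)) (e i)⟫ with hc
  have hcompl_val : ∀ k : ℕ, m ≤ k → ∑' i : K, F k i = c - ((np : ℂ) - (nm : ℂ)) := by
    intro k hk
    have hTCk : ass_TC (A ^ (2 * k + 1)) := hTCpow _ (by omega)
    have hsum_b : Summable fun i : ↥w => ⟪b i, (A ^ (2 * k + 1)) (b i)⟫ := hTCk.summable b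
    have hsum_b' : Summable fun i : ↥w => ⟪(i : H), (A ^ (2 * k + 1)) ((i : H))⟫ := by
      refine hsum_b.congr fun i => ?_
      rw [hb]
    have htotal : ∑' i : ↥w, ⟪(i : H), (A ^ (2 * k + 1)) ((i : H))⟫ = c := by
      have h1 : ∑' i : ↥w, ⟪(i : H), (A ^ (2 * k + 1)) ((i : H))⟫
          = ∑' i : ↥w, ⟪b i, (A ^ (2 * k + 1)) (b i)⟫ := by
        refine tsum_congr fun i => ?_
        rw [hb]
      rw [h1, hTCk.tr_indep b e, ass_trace_const e hX hY hXY hsq hBA hk]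
    have hsplit := Summable.tsum_add_tsum_compl (s := sIdx)
      (hsum_b'.subtype sIdx) (hsum_b'.subtype sIdxᶜ)
    rw [htotal, heigen k] at hsplit
    have : ∑' i : K, F k i
        = ∑' (i : ↑sIdxᶜ), ⟪((i : ↥w) : H), (A ^ (2 * k + 1)) ((i : ↥w) : H)⟫ := rfl
    rw [this]
    linear_combination hsplit
  -- conclude
  have hconstlim : Filter.Tendsto (fun k => ∑' i : K, F k i) Filter.atTop
      (nhds (c - ((np : ℂ) - (nm : ℂ)))) := by
    refine Filter.Tendsto.congr' ?_ tendsto_const_nhds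
    rw [Filter.EventuallyEq, Filter.eventually_atTop]
    exact ⟨m, fun k hk => (hcompl_val k hk).symm⟩
  have hczero : c - ((np : ℂ) - (nm : ℂ)) = 0 := tendsto_nhds_unique hconstlim hDCT
  rw [hconst, hindex]
  linear_combination hczero

end MainProof

/-- Avron–Seiler–Simon: if `P − Q ∈ 𝔖_{2m+1}`, so that `(P−Q)^{2m+1}` is
trace class, then for every `l ≥ m` the trace of `(P−Q)^{2l+1}` (computed in any Hilbert
basis) equals the integer `ind(P,Q)`. -/
theorem trace_odd_power_eq_index {H : Type*} [NormedAddCommGroup H]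
    [InnerProductSpace ℂ H] [CompleteSpace H]
    (P Q : H →L[ℂ] H)
    (hPsa : IsSelfAdjoint P) (hPidem : IsIdempotentElem P)
    (hQsa : IsSelfAdjoint Q) (hQidem : IsIdempotentElem Q)
    (m : ℕ) (hTC : IsTraceClass ((P - Q) ^ (2 * m + 1))) :
    ∀ l : ℕ, m ≤ l → ∀ e : HilbertBasis ℕ ℂ H,
      Summable (fun i => (inner ℂ (e i) (((P - Q) ^ (2 * l + 1)) (e i)) : ℂ)) ∧
      ∑' i, (inner ℂ (e i) (((P - Q) ^ (2 * l + 1)) (e i)) : ℂ) = (pairIndex P Q : ℂ) := by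
  exact trace_odd_power_eq_index' P Q hPsa hPidem hQsa hQidem m hTC
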